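/- arXiv:2511.18056 — 7 statements merged into one kernel-verified Lean document; each statement's English description precedes it below -/
import Mathlib

section
/- Let X be a finite set and s : X × X → ℝ a similarity function. If C₁ and C₂ are both valid clusters with respect to s, then C₁ ∩ C₂ ∈ {∅, C₁, C₂}; that is, any two valid clusters are either disjoint or nested. -/
/-- A subset `C ⊆ X` is a *valid cluster* with respect to the similarity `s` if
for all `x, y ∈ C` and all `z ∉ C`, we have `s x y > s x z`. -/
def ValidCluster {X : Type*} (s : X → X → ℝ) (C : Set X) : Prop :=
  ∀ x ∈ C, ∀ y ∈ C, ∀ z ∉ C, s x y > s x z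

/-- Any two valid clusters are either disjoint or nested. -/
theorem valid_clusters_laminar {X : Type*} [Fintype X] (s : X → X → ℝ)
    (C₁ C₂ : Set X) (h₁ : ValidCluster s C₁) (h₂ : ValidCluster s C₂) :
    C₁ ∩ C₂ = ∅ ∨ C₁ ∩ C₂ = C₁ ∨ C₁ ∩ C₂ = C₂ := by
  by_cases hne : C₁ ∩ C₂ = ∅
  · exact Or.inl hne
  · obtain ⟨a, ha₁, ha₂⟩ := Set.nonempty_iff_ne_empty.mpr hne
    by_cases hsub : C₁ ⊆ C₂
    · exact Or.inr (Or.inl (Set.inter_eq_left.mpr hsub))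
    · obtain ⟨b, hb₁, hb₂⟩ := Set.not_subset.mp hsub
      refine Or.inr (Or.inr (Set.inter_eq_right.mpr fun c hc₂ => ?_))
      by_contra hc₁
      exact absurd (h₁ a ha₁ b hb₁ c hc₁) (not_lt.mpr (h₂ a ha₂ c hc₂ b hb₂).le)
end

section
/- Let X be a nonempty finite set and s : X × X → ℝ a similarity function that is symmetric (s(x,y) = s(y,x)) and satisfies s(x,x) > s(x,y) for all x ≠ y. Then the collection H* of all valid clusters of X with respect to s is itself a tree on X (it contains X and every singleton, and is laminar), hence H* is a valid hierarchy, and every valid hierarchy T on X with respect to s satisfies T ⊆ H*. Consequently H* is the greatest element of the set of valid hierarchies partially ordered by inclusion. -/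
/-- A *tree* on `X`: a collection of nonempty subsets of `X` that is laminar,
contains all singletons, and contains the full set `X`. -/
def IsTreeOn {X : Type*} (T : Set (Set X)) : Prop :=
  (∀ t ∈ T, t.Nonempty) ∧
  (∀ u ∈ T, ∀ v ∈ T, u ∩ v = ∅ ∨ u ∩ v = u ∨ u ∩ v = v) ∧
  (∀ x : X, ({x} : Set X) ∈ T) ∧
  (Set.univ : Set X) ∈ T

/-- A *valid hierarchy* on `X` with respect to `s`: a tree on `X`
all of whose members are valid clusters. -/
def ValidHierarchy {X : Type*} (s : X → X → ℝ) (T : Set (Set X)) : Prop :=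
  IsTreeOn T ∧ ∀ t ∈ T, ValidCluster s t

/-- The *finest valid hierarchy* `H*(X,s)`: the collection of all (nonempty)
valid clusters of `X` with respect to `s`. -/
def FinestHierarchy {X : Type*} (s : X → X → ℝ) : Set (Set X) :=
  {C : Set X | C.Nonempty ∧ ValidCluster s C}

/-- The collection `H*` of all valid clusters is itself a valid hierarchy, and it is
the greatest element (under `⊆`) of the set of valid hierarchies. -/
theorem finest_hierarchy_is_greatest {X : Type*} [Fintype X] [Nonempty X]
    (s : X → X → ℝ) (hsym : ∀ x y : X, s x y = s y x)
    (hself : ∀ x y : X, x ≠ y → s x x > s x y) :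
    ValidHierarchy s (FinestHierarchy s) ∧
      IsGreatest {T : Set (Set X) | ValidHierarchy s T} (FinestHierarchy s) := by
  have hvh : ValidHierarchy s (FinestHierarchy s) := by
    refine ⟨⟨fun t ht => ht.1, ?_, ?_, ?_⟩, fun t ht => ht.2⟩
    · -- laminarity
      intro u hu v hv
      by_cases hne : (u ∩ v).Nonempty
      · obtain ⟨z, hzu, hzv⟩ := hne
        by_cases huv : u ⊆ v
        · right; left; exact Set.inter_eq_left.mpr huv
        · right; right
          refine Set.inter_eq_right.mpr (fun y hy => ?_)
          by_contra hyu
          obtain ⟨x, hxu, hxv⟩ := Set.not_subset.mp huv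
          have h1 : s z x > s z y := hu.2 z hzu x hxu y hyu
          have h2 : s z y > s z x := hv.2 z hzv y hy x hxv
          linarith
      · left; exact Set.not_nonempty_iff_eq_empty.mp hne
    · intro x
      refine ⟨⟨x, rfl⟩, ?_⟩
      intro a ha b hb z hz
      rw [Set.mem_singleton_iff] at ha hb
      rw [ha, hb]
      exact hself x z (fun h => hz (h ▸ rfl))
    · exact ⟨Set.univ_nonempty, fun x _ y _ z hz => absurd (Set.mem_univ z) hz⟩
  refine ⟨hvh, hvh, fun T hT t ht => ⟨hT.1.1 t ht, hT.2 t ht⟩⟩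
end

section
/- Let X be a nonempty finite set and s : X × X → ℝ a symmetric similarity function with s(x,x) > s(x,y) for all x ≠ y. For any tree T on X, let T⁺ = {t ∈ T : t is a valid cluster with respect to s} be the pruned collection obtained by removing from T all members violating validity. Then T⁺ is a valid hierarchy on X with respect to s, and T⁺ = T ∩ H*(X,s), where H*(X,s) is the collection of all valid clusters. -/
/-- Pruning an arbitrary tree of its non-valid members yields a valid hierarchy,
and this pruned collection equals `T ∩ H*(X,s)`. -/
theorem pruned_tree_is_valid_hierarchy {X : Type*} [Fintype X] [Nonempty X]
    (s : X → X → ℝ) (hsym : ∀ x y : X, s x y = s y x)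
    (hself : ∀ x y : X, x ≠ y → s x x > s x y)
    (T : Set (Set X)) (hT : IsTreeOn T) :
    ValidHierarchy s {t ∈ T | ValidCluster s t} ∧
      {t ∈ T | ValidCluster s t} = T ∩ FinestHierarchy s := by
  obtain ⟨hne, hlam, hsing, huniv⟩ := hT
  have hsingval : ∀ x : X, ValidCluster s ({x} : Set X) := by
    intro x a ha b hb z hz
    simp only [Set.mem_singleton_iff] at ha hb hz
    rw [ha, hb]
    exact hself x z (fun h => hz h.symm)
  have hunival : ValidCluster s (Set.univ : Set X) := by
    intro a _ b _ z hz; exact absurd (Set.mem_univ z) hz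
  constructor
  · refine ⟨⟨?_, ?_, ?_, ?_⟩, ?_⟩
    · intro t ht; exact hne t ht.1
    · intro u hu v hv; exact hlam u hu.1 v hv.1
    · intro x; exact ⟨hsing x, hsingval x⟩
    · exact ⟨huniv, hunival⟩
    · intro t ht; exact ht.2
  · ext t
    simp only [Set.mem_setOf_eq, Set.mem_inter_iff, FinestHierarchy]
    constructor
    · rintro ⟨h1, h2⟩; exact ⟨h1, hne t h1, h2⟩
    · rintro ⟨h1, _, h2⟩; exact ⟨h1, h2⟩
end

section
/- Ward's linkage violates the monotonicity-across-merges condition for dissimilarities: there exist positive integers n₁, n₂, n₃, n₄ and nonnegative reals d₁₂, d₁₃, d₁₄, d₂₃, d₂₄, d₃₄ such that d₁₃ < min(d₁₄, d₃₄) and d₂₃ < min(d₂₄, d₃₄), and yet W₃ ≥ min(W₄, d₃₄), where W₃ = ((n₁+n₃)·d₁₃ + (n₂+n₃)·d₂₃ − n₃·d₁₂)/(n₁+n₂+n₃) and W₄ = ((n₁+n₄)·d₁₄ + (n₂+n₄)·d₂₄ − n₄·d₁₂)/(n₁+n₂+n₄) are the Ward updates of the dissimilarity from the merged cluster t₁ ∪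 t₂ to t₃ and to t₄, respectively. -/
/-- Ward's linkage violates the monotonicity-across-merges condition for
dissimilarities: there are cluster sizes and pairwise dissimilarities where each of
`t₁, t₂` is closer to `t₃` than to `t₄` (and than `t₃` is to `t₄`), yet the Ward
update makes the merged cluster `t₁ ∪ t₂` not strictly closer to `t₃`. -/
theorem ward_violates_monotonicity :
    ∃ (n₁ n₂ n₃ n₄ : ℕ) (d₁₂ d₁₃ d₁₄ d₂₃ d₂₄ d₃₄ : ℝ),
      0 < n₁ ∧ 0 < n₂ ∧ 0 < n₃ ∧ 0 < n₄ ∧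
      0 ≤ d₁₂ ∧ 0 ≤ d₁₃ ∧ 0 ≤ d₁₄ ∧ 0 ≤ d₂₃ ∧ 0 ≤ d₂₄ ∧ 0 ≤ d₃₄ ∧
      d₁₃ < min d₁₄ d₃₄ ∧ d₂₃ < min d₂₄ d₃₄ ∧
      (((n₁ : ℝ) + n₃) * d₁₃ + ((n₂ : ℝ) + n₃) * d₂₃ - (n₃ : ℝ) * d₁₂) /
          ((n₁ : ℝ) + n₂ + n₃) ≥
        min ((((n₁ : ℝ) + n₄) * d₁₄ + ((n₂ : ℝ) + n₄) * d₂₄ - (n₄ : ℝ) * d₁₂) /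
          ((n₁ : ℝ) + n₂ + n₄)) d₃₄ := by
  refine ⟨1,1,1,1,0,3,100,3,100,4, by norm_num, by norm_num, by norm_num, by norm_num,
    by norm_num, by norm_num, by norm_num, by norm_num, by norm_num, by norm_num,
    by norm_num, by norm_num, by norm_num⟩
end

section
/- Let X be a nonempty finite set and s : X × X → ℝ a symmetric similarity function with s(x,x) > s(x,y) for all x ≠ y, which is moreover ultrametric in the similarity sense: s(x,y) ≥ min(s(x,z), s(y,z)) for all x, y, z ∈ X. Let H* = H*(X,s) be the finest valid hierarchy (the collection of all valid clusters), and for x, y ∈ X let lca(x,y) denote the ⊆-minimal member of H* containing both x and y. Then there exists a height function h : H* → ℝ such that h(t) > h(t') whenever t, t' ∈ H* with t ⊊ t', and s(x,y) = h(lca(x,y)) for all x, y ∈ X. -/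
/-- `t` is the least common ancestor of `x` and `y` in the laminar family `H`:
it is a member of `H` containing both `x` and `y`, and it is contained in every
member of `H` containing both. -/
def IsLca {X : Type*} (H : Set (Set X)) (x y : X) (t : Set X) : Prop :=
  t ∈ H ∧ x ∈ t ∧ y ∈ t ∧ ∀ t' ∈ H, x ∈ t' → y ∈ t' → t ⊆ t'

/-- If the similarity `s` is ultrametric, then the finest valid hierarchy carries a
height function `h`, strictly decreasing along strict inclusions, such that
`s x y = h (lca x y)` for all `x, y`. -/
theorem ultrametric_finest_hierarchy_dendrogram {X : Type*} [Fintype X] [Nonempty X]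
    (s : X → X → ℝ) (hsym : ∀ x y : X, s x y = s y x)
    (hself : ∀ x y : X, x ≠ y → s x x > s x y)
    (hultra : ∀ x y z : X, s x y ≥ min (s x z) (s y z)) :
    ∃ h : Set X → ℝ,
      (∀ t ∈ FinestHierarchy s, ∀ t' ∈ FinestHierarchy s, t ⊂ t' → h t > h t') ∧
      ∀ (x y : X) (t : Set X), IsLca (FinestHierarchy s) x y t → s x y = h t := by
  classical
  refine ⟨fun t => sInf (Set.image2 s t t), ?_, ?_⟩
  · rintro t ⟨htne, htv⟩ t' ⟨ht'ne, _⟩ hss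
    obtain ⟨z, hzt', hzt⟩ := Set.exists_of_ssubset hss
    have hfin : (Set.image2 s t t).Finite := Set.toFinite _
    have hne : (Set.image2 s t t).Nonempty := htne.image2 htne
    obtain ⟨x, hx, y, hy, hxy⟩ := hne.csInf_mem hfin
    have h1 : sInf (Set.image2 s t t) > s x z := hxy ▸ htv x hx y hy z hzt
    have h2 : sInf (Set.image2 s t' t') ≤ s x z :=
      csInf_le (Set.toFinite _).bddBelow
        (Set.mem_image2_of_mem (hss.1 hx) hzt')
    linarith
  · rintro x y t ⟨⟨htne, htv⟩, hxt, hyt, hmin⟩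
    set r := s x y with hr
    set B : Set X := {u | s x u ≥ r} with hB
    have hxB : x ∈ B := by
      by_cases hxy : x = y
      · simp [hB, hr, hxy]
      · exact le_of_lt (hself x y hxy)
    have hyB : y ∈ B := le_refl r
    have hBlow : ∀ u ∈ B, ∀ v ∈ B, s u v ≥ r := by
      intro u hu v hv
      have := hultra u v x
      have h1 : s u x ≥ r := (hsym u x) ▸ hu
      have h2 : s v x ≥ r := (hsym v x) ▸ hv
      calc s u v ≥ min (s u x) (s v x) := this
        _ ≥ r := le_min h1 h2
    have hBmem : B ∈ FinestHierarchy s := by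
      refine ⟨⟨x, hxB⟩, ?_⟩
      intro u hu v hv w hw
      have hlow : s u v ≥ r := hBlow u hu v hv
      have hxw : s x w < r := lt_of_not_ge hw
      have hxu : s x u ≥ r := hu
      have : s x w ≥ min (s x u) (s w u) := hultra x w u
      have hwu : s w u ≤ s x w := by
        rcases le_total (s x u) (s w u) with hc | hc
        · rw [min_eq_left hc] at this; linarith
        · rw [min_eq_right hc] at this; linarith
      have : s u w < r := by rw [hsym u w]; linarith
      linarith
    have htB : t ⊆ B := hmin B hBmem hxB hyB
    have hle : sInf (Set.image2 s t t) ≤ r :=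
      csInf_le (Set.toFinite _).bddBelow (Set.mem_image2_of_mem hxt hyt)
    have hge : r ≤ sInf (Set.image2 s t t) := by
      apply le_csInf (htne.image2 htne)
      rintro b ⟨u, hu, v, hv, rfl⟩
      exact hBlow u (htB hu) v (htB hv)
    linarith
end

section
/- Let X be a nonempty finite set and let T_bin be a binary tree on X, i.e. a tree on X such that every member t ∈ T_bin with at least two elements is the union of two disjoint members of T_bin. Then for every nonempty subset v ⊆ X with v ∉ T_bin, there exists u ∈ T_bin such that u ∩ v ∉ {∅, u, v}. -/
/-- If `T_bin` is a binary tree on `X` (every member with at least two elements is the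
disjoint union of two members), then every nonempty subset `v ∉ T_bin` crosses some
member of `T_bin`: there is `u ∈ T_bin` with `u ∩ v ∉ {∅, u, v}`. -/
theorem binary_tree_crossing {X : Type*} [Fintype X] [Nonempty X]
    (T : Set (Set X)) (hT : IsTreeOn T)
    (hbin : ∀ t ∈ T, (∃ a ∈ t, ∃ b ∈ t, a ≠ b) →
      ∃ t₁ ∈ T, ∃ t₂ ∈ T, t₁ ∩ t₂ = ∅ ∧ t = t₁ ∪ t₂)
    (v : Set X) (hv : v.Nonempty) (hvT : v ∉ T) :
    ∃ u ∈ T, ¬(u ∩ v = ∅ ∨ u ∩ v = u ∨ u ∩ v = v) := by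
  by_contra hcon
  push_neg at hcon
  have h : ∀ u ∈ T, u ∩ v = ∅ ∨ u ∩ v = u ∨ u ∩ v = v := hcon
  -- main claim: no t ∈ T contains v
  have key : ∀ n : ℕ, ∀ t ∈ T, t.ncard ≤ n → v ⊆ t → False := by
    intro n
    induction n with
    | zero =>
      intro t ht hcard hsub
      have hne : t.Nonempty := hT.1 t ht
      have : 0 < t.ncard := (Set.ncard_pos (Set.toFinite t)).mpr hne
      omega
    | succ n ih =>
      intro t ht hcard hsub
      have htv : t ≠ v := fun e => hvT (e ▸ ht)
      obtain ⟨y, hy⟩ := hv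
      obtain ⟨x, hxt, hxv⟩ : ∃ x ∈ t, x ∉ v := by
        by_contra hc
        push_neg at hc
        exact htv (Set.Subset.antisymm hc hsub)
      obtain ⟨t₁, ht₁, t₂, ht₂, hdis, heq⟩ := hbin t ht ⟨x, hxt, y, hsub hy, fun e => hxv (e ▸ hy)⟩
      obtain ⟨a, ha⟩ := hT.1 t₁ ht₁
      obtain ⟨b, hb⟩ := hT.1 t₂ ht₂
      have hb1 : b ∉ t₁ := fun hb1 => by
        have : b ∈ t₁ ∩ t₂ := ⟨hb1, hb⟩
        rw [hdis] at this; exact this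
      have ha2 : a ∉ t₂ := fun ha2 => by
        have : a ∈ t₁ ∩ t₂ := ⟨ha, ha2⟩
        rw [hdis] at this; exact this
      have hsub1 : t₁ ⊆ t := heq ▸ Set.subset_union_left
      have hsub2 : t₂ ⊆ t := heq ▸ Set.subset_union_right
      have hlt1 : t₁.ncard < t.ncard :=
        Set.ncard_lt_ncard ⟨hsub1, fun hc => hb1 (hc (hsub2 hb))⟩ (Set.toFinite t)
      have hlt2 : t₂.ncard < t.ncard :=
        Set.ncard_lt_ncard ⟨hsub2, fun hc => ha2 (hc (hsub1 ha))⟩ (Set.toFinite t)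
      -- v ∩ t₁ and v ∩ t₂ analysis
      have hvsplit : v = (t₁ ∩ v) ∪ (t₂ ∩ v) := by
        ext z
        constructor
        · intro hz
          rcases (heq ▸ hsub hz : z ∈ t₁ ∪ t₂) with h1 | h2
          · exact Or.inl ⟨h1, hz⟩
          · exact Or.inr ⟨h2, hz⟩
        · rintro (⟨_, hz⟩ | ⟨_, hz⟩) <;> exact hz
      rcases h t₁ ht₁ with h1 | h1 | h1
      · rcases h t₂ ht₂ with h2 | h2 | h2
        · -- v empty, contradiction
          rw [h1, h2] at hvsplit
          simp at hvsplit
          exact absurd hvsplit (Set.nonempty_iff_ne_empty.mp ⟨y, hy⟩)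
        · -- v = t₂
          rw [h1, h2] at hvsplit
          simp at hvsplit
          exact hvT (hvsplit ▸ ht₂)
        · -- v ⊆ t₂
          have : v ⊆ t₂ := by rw [← h2]; exact Set.inter_subset_left
          exact ih t₂ ht₂ (by omega) this
      · rcases h t₂ ht₂ with h2 | h2 | h2
        · -- v = t₁
          rw [h1, h2] at hvsplit
          simp at hvsplit
          exact hvT (hvsplit ▸ ht₁)
        · -- v = t₁ ∪ t₂ = t
          rw [h1, h2] at hvsplit
          exact htv (heq.trans hvsplit.symm)
        · have : v ⊆ t₂ := by rw [← h2]; exact Set.inter_subset_left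
          exact ih t₂ ht₂ (by omega) this
      · have : v ⊆ t₁ := by rw [← h1]; exact Set.inter_subset_left
        exact ih t₁ ht₁ (by omega) this
  exact key (Set.univ : Set X).ncard Set.univ hT.2.2.2 le_rfl (Set.subset_univ v)
end

section
/- Let X be a nonempty finite set, s : X × X → ℝ a similarity function, and T a tree on X. For t ∈ T with t ≠ X, let parent(t) denote the ⊆-minimal member of T strictly containing t (which exists and is unique by laminarity and finiteness). Then T is a valid hierarchy with respect to s if and only if for every t ∈ T with t ≠ X, for all x, y ∈ t and all z ∈ parent(t) \ t, one has s(x,y) > s(x,z). That is, the validity condition with z ranging over all of X \ t is equivalent to the condition with z ranging only over parent(t) \ t. -/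
/-- `p` is the *parent* of `t` in `T`: the `⊆`-minimal member of `T`
strictly containing `t`. -/
def IsParent {X : Type*} (T : Set (Set X)) (t p : Set X) : Prop :=
  p ∈ T ∧ t ⊂ p ∧ ∀ q ∈ T, t ⊂ q → p ⊆ q

/-- A tree `T` is a valid hierarchy (all its members are valid clusters) if and only
if, for every non-root member `t`, the validity inequality holds with the outside
point `z` ranging only over `parent(t) \ t` instead of all of `X \ t`. -/
theorem validity_iff_parent_condition {X : Type*} [Fintype X] [Nonempty X]
    (s : X → X → ℝ) (T : Set (Set X)) (hT : IsTreeOn T) :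
    (∀ t ∈ T, ValidCluster s t) ↔
      (∀ t ∈ T, t ≠ Set.univ → ∀ p, IsParent T t p →
        ∀ x ∈ t, ∀ y ∈ t, ∀ z ∈ p \ t, s x y > s x z) := by
  obtain ⟨hne, hlam, _hsing, huniv⟩ := hT
  constructor
  · intro hvalid t ht _ p hp x hx y hy z hz
    exact hvalid t ht x hx y hy z hz.2
  · intro hcond
    -- parent existence
    have hparent : ∀ t ∈ T, t ≠ Set.univ → ∃ p, IsParent T t p := by
      intro t ht htu
      set S : Set (Set X) := {q | q ∈ T ∧ t ⊂ q} with hS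
      have hSne : S.Nonempty := ⟨Set.univ, huniv, Set.ssubset_univ_iff.mpr htu⟩
      obtain ⟨p, hpS, hmin⟩ :=
        Set.Finite.exists_minimalFor id S (Set.toFinite S) hSne
      refine ⟨p, hpS.1, hpS.2, ?_⟩
      intro q hq htq
      rcases hlam p hpS.1 q hq with h | h | h
      · exfalso
        obtain ⟨a, ha⟩ := hne t ht
        have : a ∈ p ∩ q := ⟨hpS.2.1 ha, htq.1 ha⟩
        rw [h] at this
        exact this
      · intro a ha
        have : a ∈ p ∩ q := h.symm ▸ ha
        exact this.2
      · have hqp : q ⊆ p := by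
          intro a ha
          have : a ∈ p ∩ q := h.symm ▸ ha
          exact this.1
        have := hmin (j := q) ⟨hq, htq⟩ hqp
        simp only [id] at this
        exact this
    -- main induction on the size of the complement
    have key : ∀ n : ℕ, ∀ t ∈ T, (tᶜ : Set X).ncard ≤ n → ValidCluster s t := by
      intro n
      induction n with
      | zero =>
        intro t ht hcard x hx y hy z hz
        have : (tᶜ : Set X) = ∅ := by
          have := Set.ncard_eq_zero (Set.toFinite _) |>.mp (Nat.le_zero.mp hcard)
          exact this
        exact absurd (this ▸ hz : z ∈ (∅ : Set X)) (Set.notMem_empty z)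
      | succ n ih =>
        intro t ht hcard x hx y hy z hz
        by_cases htu : t = Set.univ
        · exact absurd (htu ▸ Set.mem_univ z) hz
        · obtain ⟨p, hp⟩ := hparent t ht htu
          by_cases hzp : z ∈ p
          · exact hcond t ht htu p hp x hx y hy z ⟨hzp, hz⟩
          · have hsub : (pᶜ : Set X) ⊂ tᶜ := by
              have := hp.2.1
              exact ⟨Set.compl_subset_compl.mpr this.1,
                fun h => this.2 (by simpa using Set.compl_subset_compl.mpr h)⟩
            have hlt : (pᶜ : Set X).ncard < (tᶜ : Set X).ncard :=
              Set.ncard_lt_ncard hsub (Set.toFinite _)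
            have hcard' : (pᶜ : Set X).ncard ≤ n := by omega
            exact ih p hp.1 hcard' x (hp.2.1.1 hx) y (hp.2.1.1 hy) z hzp
    intro t ht
    exact key _ t ht le_rfl
end
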